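/- Fix integers K ≥ 2, reals σ > 0, c > 0, δ ∈ (0,1) with K/δ > 1, and means μ_1 > μ_2 ≥ … ≥ μ_K with gap Δ = μ_1 − μ_2. Let t_W and n be positive integers with t_W ≥ (2σ/Δ)·√(Kc·ln(K/δ)) and n ≥ t_W/(Kc). Fix j ≠ 1 and let X_{1,t}, X_{j,t} (t ∈ {t_W+1,…,t_W+n}) be mutually independent real random variables with X_{1,t} ~ N(μ_1, σ²/t) and X_{j,t} ~ N(μ_j, σ²/t). Define μ̂'_k = (1/n)·Σ_{t=t_W+1}^{t_W+n} X_{k,t} for k ∈ {1, j}. Then P(μ̂'_j ≥ μ̂'_1) ≤ δ/K. -/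

import Mathlib

open MeasureTheory ProbabilityTheory Real
open scoped NNReal

lemma quad_rewrite (a b : ℝ) (ha : 0 < a) :
    (fun x : ℝ => Real.exp (-a * x ^ 2 + b * x))
      = fun x => Real.exp (b ^ 2 / (4 * a)) * Real.exp (-a * (x - b / (2 * a)) ^ 2) := by
  funext x
  rw [← Real.exp_add]
  congr 1
  field_simp
  ring

lemma integrable_exp_quad (a b : ℝ) (ha : 0 < a) :
    Integrable (fun x : ℝ => Real.exp (-a * x ^ 2 + b * x)) := by
  rw [quad_rewrite a b ha]
  exact ((integrable_exp_neg_mul_sq ha).comp_sub_right (b / (2 * a))).const_mul _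

lemma integral_exp_quad (a b : ℝ) (ha : 0 < a) :
    ∫ x : ℝ, Real.exp (-a * x ^ 2 + b * x)
      = Real.exp (b ^ 2 / (4 * a)) * Real.sqrt (π / a) := by
  rw [quad_rewrite a b ha, integral_const_mul]
  congr 1
  rw [show (fun x : ℝ => Real.exp (-a * (x - b / (2 * a)) ^ 2))
      = fun x => (fun y => Real.exp (-a * y ^ 2)) (x - b / (2 * a)) from rfl]
  rw [integral_sub_right_eq_self (fun y : ℝ => Real.exp (-a * y ^ 2)) (b / (2 * a))]
  exact integral_gaussian a

lemma pdf_mul_exp_eq (m : ℝ) {v : ℝ≥0} (hv : v ≠ 0) (t : ℝ) :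
    (fun x : ℝ => gaussianPDFReal m v x * Real.exp (t * x))
      = fun x => ((Real.sqrt (2 * π * v))⁻¹ * Real.exp (- m ^ 2 / (2 * v))) *
          Real.exp (-(2 * (v : ℝ))⁻¹ * x ^ 2 + (t + m / v) * x) := by
  have hv0 : (0 : ℝ) < v := lt_of_le_of_ne v.coe_nonneg (by exact_mod_cast (Ne.symm hv))
  funext x
  rw [gaussianPDFReal]
  simp only [mul_assoc, ← Real.exp_add]
  congr 2
  field_simp
  ring

lemma integral_exp_mul_gaussianReal (m : ℝ) {v : ℝ≥0} (hv : v ≠ 0) (t : ℝ) :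
    ∫ x, Real.exp (t * x) ∂(gaussianReal m v) = Real.exp (m * t + (v : ℝ) * t ^ 2 / 2) := by
  have hv0 : (0 : ℝ) < v := lt_of_le_of_ne v.coe_nonneg (by exact_mod_cast (Ne.symm hv))
  have ha : (0 : ℝ) < (2 * (v : ℝ))⁻¹ := by positivity
  rw [gaussianReal_of_var_ne_zero m hv]
  have hpdf : gaussianPDF m v = fun x => ENNReal.ofNNReal (Real.toNNReal (gaussianPDFReal m v x)) :=
    rfl
  rw [hpdf, integral_withDensity_eq_integral_smul
    ((measurable_gaussianPDFReal m v).real_toNNReal) _]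
  have : (fun x => Real.toNNReal (gaussianPDFReal m v x) • Real.exp (t * x))
      = fun x => gaussianPDFReal m v x * Real.exp (t * x) := by
    funext x
    rw [NNReal.smul_def, smul_eq_mul, Real.coe_toNNReal _ (gaussianPDFReal_nonneg m v x)]
  rw [this, pdf_mul_exp_eq m hv t, integral_const_mul,
    integral_exp_quad _ _ ha]
  have hsqrt : Real.sqrt (π / (2 * (v : ℝ))⁻¹) = Real.sqrt (2 * π * v) := by
    congr 1
    field_simp
  rw [hsqrt]
  have h2 : (0:ℝ) < Real.sqrt (2 * π * v) := Real.sqrt_pos.2 (by positivity)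
  field_simp
  rw [← Real.exp_add]
  congr 1
  field_simp
  ring

lemma integrable_exp_mul_gaussianReal (m : ℝ) {v : ℝ≥0} (hv : v ≠ 0) (t : ℝ) :
    Integrable (fun x => Real.exp (t * x)) (gaussianReal m v) := by
  have hv0 : (0 : ℝ) < v := lt_of_le_of_ne v.coe_nonneg (by exact_mod_cast (Ne.symm hv))
  have ha : (0 : ℝ) < (2 * (v : ℝ))⁻¹ := by positivity
  rw [gaussianReal_of_var_ne_zero m hv]
  have hpdf : gaussianPDF m v = fun x => ENNReal.ofNNReal (Real.toNNReal (gaussianPDFReal m v x)) :=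
    rfl
  rw [hpdf, integrable_withDensity_iff_integrable_smul
    ((measurable_gaussianPDFReal m v).real_toNNReal)]
  have : (fun x => Real.toNNReal (gaussianPDFReal m v x) • Real.exp (t * x))
      = fun x => gaussianPDFReal m v x * Real.exp (t * x) := by
    funext x
    rw [NNReal.smul_def, smul_eq_mul, Real.coe_toNNReal _ (gaussianPDFReal_nonneg m v x)]
  rw [this, pdf_mul_exp_eq m hv t]
  exact (integrable_exp_quad _ _ ha).const_mul _

lemma mgf_of_map_gaussianReal {Ω : Type*} [MeasurableSpace Ω] {P : Measure Ω} {Y : Ω → ℝ}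
    (hY : Measurable Y) {m : ℝ} {v : ℝ≥0} (hv : v ≠ 0)
    (hmap : P.map Y = gaussianReal m v) (t : ℝ) :
    mgf Y P t = Real.exp (m * t + (v : ℝ) * t ^ 2 / 2) := by
  have hsm : AEStronglyMeasurable (fun x : ℝ => Real.exp (t * x)) (P.map Y) :=
    ((measurable_id.const_mul t).exp).aestronglyMeasurable
  have h := integral_map hY.aemeasurable hsm
  rw [mgf, ← h, hmap, integral_exp_mul_gaussianReal m hv t]

lemma integrable_exp_of_map_gaussianReal {Ω : Type*} [MeasurableSpace Ω] {P : Measure Ω}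
    {Y : Ω → ℝ} (hY : Measurable Y) {m : ℝ} {v : ℝ≥0} (hv : v ≠ 0)
    (hmap : P.map Y = gaussianReal m v) (t : ℝ) :
    Integrable (fun ω => Real.exp (t * Y ω)) P := by
  have hsm : AEStronglyMeasurable (fun x : ℝ => Real.exp (t * x)) (P.map Y) :=
    ((measurable_id.const_mul t).exp).aestronglyMeasurable
  have h := integrable_exp_mul_gaussianReal m hv t
  rw [← hmap] at h
  exact (integrable_map_measure hsm hY.aemeasurable).mp h

set_option maxHeartbeats 1000000 in
/-- Fix `K ≥ 2`, `σ, c > 0`, `δ ∈ (0,1)` with `K/δ > 1`, ordered means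
`μ 0 > μ 1 ≥ … ≥ μ (K-1)` with gap `Δ = μ 0 - μ 1`, and integers `tW, n` with
`tW ≥ (2σ/Δ)√(Kc ln(K/δ))` and `n ≥ tW/(Kc)`.  Fix a suboptimal arm `j ≠ 0` and let
`X 0 i ~ N(μ 0, σ²/t)` and `X 1 i ~ N(μ j, σ²/t)` (with `t = tW + 1 + i`) be mutually
independent.  Then the probability that the empirical mean of arm `j` over rounds
`tW+1, …, tW+n` is at least that of arm `1` is at most `δ/K`. -/
theorem wtcs_single_arm_error_bound
    {Ω : Type*} [MeasurableSpace Ω] (P : Measure Ω) [IsProbabilityMeasure P]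
    (K : ℕ) (hK : 2 ≤ K) (σ c δ : ℝ) (hσ : 0 < σ) (hc : 0 < c)
    (hδ0 : 0 < δ) (hδ1 : δ < 1) (hKδ : 1 < (K : ℝ) / δ)
    (μ : Fin K → ℝ)
    (hμtop : μ ⟨1, by omega⟩ < μ ⟨0, by omega⟩)
    (hμmono : ∀ i j : Fin K, i ≤ j → μ j ≤ μ i)
    (Δ : ℝ) (hΔ : Δ = μ ⟨0, by omega⟩ - μ ⟨1, by omega⟩)
    (tW n : ℕ) (htW0 : 0 < tW) (hn0 : 0 < n)
    (htW : (2 * σ / Δ) * Real.sqrt ((K : ℝ) * c * Real.log ((K : ℝ) / δ)) ≤ (tW : ℝ))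
    (hn : (tW : ℝ) / ((K : ℝ) * c) ≤ (n : ℝ))
    (j : Fin K) (hj : j ≠ ⟨0, by omega⟩)
    (X : Fin 2 → Fin n → Ω → ℝ)
    (hXmeas : ∀ k i, Measurable (X k i))
    (hXdist1 : ∀ i : Fin n, P.map (X 0 i) =
      gaussianReal (μ ⟨0, by omega⟩) (Real.toNNReal (σ ^ 2 / ((tW : ℝ) + 1 + (i : ℕ)))))
    (hXdistj : ∀ i : Fin n, P.map (X 1 i) =
      gaussianReal (μ j) (Real.toNNReal (σ ^ 2 / ((tW : ℝ) + 1 + (i : ℕ)))))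
    (hXindep : iIndepFun
      (fun p : Fin 2 × Fin n => X p.1 p.2) P)
    (muhat : Fin 2 → Ω → ℝ)
    (hmuhat : ∀ k ω, muhat k ω = (1 / (n : ℝ)) * ∑ i : Fin n, X k i ω) :
    P {ω | muhat 0 ω ≤ muhat 1 ω} ≤ ENNReal.ofReal (δ / (K : ℝ)) := by
  classical
  -- basic positivity facts
  have hn' : (0:ℝ) < (n:ℝ) := by exact_mod_cast hn0
  have htW' : (0:ℝ) < (tW:ℝ) := by exact_mod_cast htW0
  have hKR : (0:ℝ) < (K:ℝ) := by positivity
  -- means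
  set m0 : ℝ := μ ⟨0, by omega⟩ with hm0
  set m1 : ℝ := μ ⟨1, by omega⟩ with hm1
  set mj : ℝ := μ j with hmj
  have h1lej : (⟨1, by omega⟩ : Fin K) ≤ j := by
    have hjv : (j : ℕ) ≠ 0 := by
      intro h
      exact hj (Fin.ext h)
    exact Fin.mk_le_of_le_val (by omega)
  have hgapj : mj ≤ m1 := hμmono _ j h1lej
  have hΔpos : 0 < Δ := by rw [hΔ]; linarith
  have hgap : Δ ≤ m0 - mj := by rw [hΔ]; linarith
  -- threshold
  set t₀ : ℝ := Δ * (tW:ℝ) / (2 * σ ^ 2) with ht₀def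
  have ht₀ : 0 < t₀ := by positivity
  -- variances
  set V : Fin n → ℝ≥0 := fun i => Real.toNNReal (σ ^ 2 / ((tW : ℝ) + 1 + (i:ℕ))) with hV
  have hvpos : ∀ i : Fin n, (0:ℝ) < σ ^ 2 / ((tW : ℝ) + 1 + (i:ℕ)) := fun i => by positivity
  have hVne : ∀ i, V i ≠ 0 := fun i => by
    simp only [hV]
    exact ne_of_gt (Real.toNNReal_pos.mpr (hvpos i))
  have hVcoe : ∀ i, ((V i : ℝ≥0) : ℝ) = σ ^ 2 / ((tW : ℝ) + 1 + (i:ℕ)) := fun i =>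
    Real.coe_toNNReal _ (hvpos i).le
  have hVle : ∀ i, ((V i : ℝ≥0) : ℝ) ≤ σ ^ 2 / (tW:ℝ) := fun i => by
    rw [hVcoe i]
    have hle : (tW:ℝ) ≤ (tW:ℝ) + 1 + (i:ℕ) := by
      have : (0:ℝ) ≤ ((i:ℕ):ℝ) := Nat.cast_nonneg _
      linarith
    exact div_le_div_of_nonneg_left (by positivity) htW' hle
  -- signed variables
  set Y : Fin 2 × Fin n → Ω → ℝ :=
    fun p ω => (if p.1 = 0 then (-1:ℝ) else 1) * X p.1 p.2 ω with hYdef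
  have hYmeas : ∀ p, Measurable (Y p) := fun p => (hXmeas p.1 p.2).const_mul _
  have hYindep : iIndepFun Y P :=
    hXindep.comp (fun p (x:ℝ) => (if p.1 = 0 then (-1:ℝ) else 1) * x)
      (fun p => measurable_id.const_mul _)
  set mY : Fin 2 × Fin n → ℝ := fun p => if p.1 = 0 then -m0 else mj with hmYdef
  have hYdist : ∀ p : Fin 2 × Fin n, P.map (Y p) = gaussianReal (mY p) (V p.2) := by
    rintro ⟨k, i⟩
    fin_cases k
    · show P.map (Y (0, i)) = gaussianReal (mY (0, i)) (V i)
      have hmul : Measurable (fun x : ℝ => (-1:ℝ) * x) := by fun_prop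
      have h3 : P.map (Y (0, i)) = P.map ((fun x : ℝ => (-1:ℝ) * x) ∘ X 0 i) := by
        congr 1
      rw [h3, ← Measure.map_map hmul (hXmeas 0 i), hXdist1 i, gaussianReal_map_const_mul (-1)]
      congr 1
      · simp [hmYdef]
      · apply NNReal.coe_injective
        rw [NNReal.coe_mul, hVcoe i]
        norm_num [NNReal.coe_mk]
    · show P.map (Y (1, i)) = gaussianReal (mY (1, i)) (V i)
      have hmul : Measurable (fun x : ℝ => (1:ℝ) * x) := by fun_prop
      have h3 : P.map (Y (1, i)) = P.map ((fun x : ℝ => (1:ℝ) * x) ∘ X 1 i) := by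
        congr 1
      rw [h3, ← Measure.map_map hmul (hXmeas 1 i), hXdistj i, gaussianReal_map_const_mul 1]
      congr 1
      · simp [hmYdef]
      · apply NNReal.coe_injective
        rw [NNReal.coe_mul, hVcoe i]
        norm_num [NNReal.coe_mk]
  have hmgfY : ∀ p, mgf (Y p) P t₀
      = Real.exp (mY p * t₀ + ((V p.2 : ℝ≥0) : ℝ) * t₀ ^ 2 / 2) := fun p =>
    mgf_of_map_gaussianReal (hYmeas p) (hVne p.2) (hYdist p) t₀
  have hintY : ∀ p, Integrable (fun ω => Real.exp (t₀ * Y p ω)) P := fun p =>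
    integrable_exp_of_map_gaussianReal (hYmeas p) (hVne p.2) (hYdist p) t₀
  have hSint : Integrable (fun ω => Real.exp (t₀ * (∑ p : Fin 2 × Fin n, Y p) ω)) P :=
    hYindep.integrable_exp_mul_sum hYmeas (fun p _ => hintY p)
  have hchern := measure_ge_le_exp_mul_mgf (μ := P) (X := ∑ p : Fin 2 × Fin n, Y p)
    0 ht₀.le hSint
  -- event identification
  have hevent : {ω | muhat 0 ω ≤ muhat 1 ω}
      = {ω | (0:ℝ) ≤ (∑ p : Fin 2 × Fin n, Y p) ω} := by
    ext ω
    simp only [Set.mem_setOf_eq, hmuhat, Finset.sum_apply, Fintype.sum_prod_type,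
      Fin.sum_univ_two, hYdef, if_pos rfl, one_ne_zero, if_neg (by decide : ¬(1:Fin 2) = 0),
      if_true, if_false, neg_one_mul, one_mul, Finset.sum_neg_distrib]
    constructor
    · intro h
      have h2 : ∑ i : Fin n, X 0 i ω ≤ ∑ i : Fin n, X 1 i ω :=
        le_of_mul_le_mul_left h (by positivity)
      linarith
    · intro h
      have h2 : ∑ i : Fin n, X 0 i ω ≤ ∑ i : Fin n, X 1 i ω := by linarith
      exact mul_le_mul_of_nonneg_left h2 (by positivity)
  -- mgf of the sum
  have hmgfS : mgf (∑ p : Fin 2 × Fin n, Y p) P t₀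
      = Real.exp (∑ p : Fin 2 × Fin n, (mY p * t₀ + ((V p.2 : ℝ≥0) : ℝ) * t₀ ^ 2 / 2)) := by
    rw [hYindep.mgf_sum hYmeas, Real.exp_sum]
    exact Finset.prod_congr rfl (fun p _ => hmgfY p)
  -- bound the exponent
  have hsumle : ∑ p : Fin 2 × Fin n, (mY p * t₀ + ((V p.2 : ℝ≥0) : ℝ) * t₀ ^ 2 / 2)
      ≤ -((n:ℝ) * Δ ^ 2 * (tW:ℝ) / (4 * σ ^ 2)) := by
    have hterm : ∀ p : Fin 2 × Fin n,
        mY p * t₀ + ((V p.2 : ℝ≥0) : ℝ) * t₀ ^ 2 / 2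
          ≤ mY p * t₀ + σ ^ 2 / (tW:ℝ) * t₀ ^ 2 / 2 := fun p => by
      nlinarith [hVle p.2, sq_nonneg t₀]
    calc ∑ p : Fin 2 × Fin n, (mY p * t₀ + ((V p.2 : ℝ≥0) : ℝ) * t₀ ^ 2 / 2)
        ≤ ∑ p : Fin 2 × Fin n, (mY p * t₀ + σ ^ 2 / (tW:ℝ) * t₀ ^ 2 / 2) :=
          Finset.sum_le_sum (fun p _ => hterm p)
      _ = ∑ i : Fin n, ((-m0) * t₀ + σ ^ 2 / (tW:ℝ) * t₀ ^ 2 / 2)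
            + ∑ i : Fin n, (mj * t₀ + σ ^ 2 / (tW:ℝ) * t₀ ^ 2 / 2) := by
          rw [Fintype.sum_prod_type, Fin.sum_univ_two]
          simp [hmYdef]
      _ = (n:ℝ) * ((mj - m0) * t₀ + σ ^ 2 / (tW:ℝ) * t₀ ^ 2) := by
          rw [Finset.sum_const, Finset.sum_const, Finset.card_univ, Fintype.card_fin,
            nsmul_eq_mul, nsmul_eq_mul]
          ring
      _ ≤ (n:ℝ) * ((-Δ) * t₀ + σ ^ 2 / (tW:ℝ) * t₀ ^ 2) := by
          apply mul_le_mul_of_nonneg_left _ hn'.le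
          have : mj - m0 ≤ -Δ := by linarith
          nlinarith [ht₀]
      _ = -((n:ℝ) * Δ ^ 2 * (tW:ℝ) / (4 * σ ^ 2)) := by
          rw [ht₀def]
          field_simp
          ring
  -- final numeric bound
  have hL : 0 < Real.log ((K:ℝ)/δ) := Real.log_pos hKδ
  have hA : (0:ℝ) < (K:ℝ) * c := by positivity
  have hKcL : 0 ≤ (K:ℝ) * c * Real.log ((K:ℝ)/δ) := by positivity
  have hsq : (2*σ/Δ * Real.sqrt ((K:ℝ)*c*Real.log ((K:ℝ)/δ)))^2 ≤ (tW:ℝ)^2 :=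
    pow_le_pow_left₀ (by positivity) htW 2
  have hsq2 : (2*σ/Δ)^2 * ((K:ℝ)*c*Real.log ((K:ℝ)/δ)) ≤ (tW:ℝ)^2 := by
    rw [mul_pow, Real.sq_sqrt hKcL] at hsq
    exact hsq
  have htWn : (tW:ℝ) ≤ (K:ℝ)*c*(n:ℝ) := by
    rw [div_le_iff₀ hA] at hn
    linarith
  have hkey : Real.log ((K:ℝ)/δ) ≤ (n:ℝ) * Δ ^ 2 * (tW:ℝ) / (4 * σ ^ 2) := by
    rw [le_div_iff₀ (by positivity)]
    have e1 : 4*σ^2 * ((K:ℝ)*c*Real.log ((K:ℝ)/δ)) ≤ Δ^2 * (tW:ℝ)^2 := by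
      have h5 := mul_le_mul_of_nonneg_left hsq2 (le_of_lt (by positivity : (0:ℝ) < Δ^2))
      have h4 : Δ^2 * ((2*σ/Δ)^2 * ((K:ℝ)*c*Real.log ((K:ℝ)/δ)))
          = 4*σ^2*((K:ℝ)*c*Real.log ((K:ℝ)/δ)) := by
        field_simp
        ring
      linarith [h5, h4.ge, h4.le]
    have e2 : Δ^2 * (tW:ℝ)^2 ≤ ((K:ℝ)*c) * ((n:ℝ) * Δ^2 * (tW:ℝ)) := by
      have h6 := mul_le_mul_of_nonneg_left htWn (by positivity : (0:ℝ) ≤ Δ^2 * (tW:ℝ))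
      linarith [h6]
    have e4 : ((K:ℝ)*c) * (Real.log ((K:ℝ)/δ) * (4*σ^2))
        ≤ ((K:ℝ)*c) * ((n:ℝ) * Δ^2 * (tW:ℝ)) := by linarith [e1, e2]
    exact le_of_mul_le_mul_left e4 hA
  have hδK : δ / (K:ℝ) = Real.exp (-(Real.log ((K:ℝ)/δ))) := by
    rw [Real.exp_neg, Real.exp_log (by positivity), inv_div]
  have hfin : Real.exp (-((n:ℝ) * Δ ^ 2 * (tW:ℝ) / (4 * σ ^ 2))) ≤ δ / (K:ℝ) := by
    rw [hδK]
    exact Real.exp_le_exp.mpr (by linarith)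
  -- conclusion
  have htoReal : (P {ω | muhat 0 ω ≤ muhat 1 ω}).toReal ≤ δ / (K:ℝ) := by
    rw [hevent]
    refine le_trans hchern ?_
    calc Real.exp (-t₀ * 0) * mgf (∑ p : Fin 2 × Fin n, Y p) P t₀
        = mgf (∑ p : Fin 2 × Fin n, Y p) P t₀ := by simp
      _ = Real.exp (∑ p : Fin 2 × Fin n, (mY p * t₀ + ((V p.2 : ℝ≥0) : ℝ) * t₀ ^ 2 / 2)) :=
          hmgfS
      _ ≤ Real.exp (-((n:ℝ) * Δ ^ 2 * (tW:ℝ) / (4 * σ ^ 2))) := Real.exp_le_exp.mpr hsumle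
      _ ≤ δ / (K:ℝ) := hfin
  calc P {ω | muhat 0 ω ≤ muhat 1 ω}
      = ENNReal.ofReal (P {ω | muhat 0 ω ≤ muhat 1 ω}).toReal :=
        (ENNReal.ofReal_toReal (measure_ne_top P _)).symm
    _ ≤ ENNReal.ofReal (δ / (K:ℝ)) := ENNReal.ofReal_le_ofReal htoReal
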